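/- Let κ > 0, λ > 0 and let n ≥ 1 be an integer. If u₁ and u₂ are both S⁺ₙ-solutions of problem (P) for the same parameters (κ, λ), then u₁(x) = u₂(x) for all x ∈ [0,1]. -/

import Mathlib

open Set Real Filter
open Topology

noncomputable section

/-- `u` is twice continuously differentiable on `[a,b]`, satisfies
`1 + κ (u')² > 0` and the ODE `-u'' = λ u (1 + κ (u')²)^(3/2)` on `[a,b]`. -/
def SolODE (κ lam : ℝ) (u : ℝ → ℝ) (a b : ℝ) : Prop :=
  (∀ x ∈ Set.Icc a b, DifferentiableAt ℝ u x) ∧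
  (∀ x ∈ Set.Icc a b, DifferentiableAt ℝ (deriv u) x) ∧
  ContinuousOn (deriv (deriv u)) (Set.Icc a b) ∧
  (∀ x ∈ Set.Icc a b, 0 < 1 + κ * (deriv u x) ^ 2) ∧
  (∀ x ∈ Set.Icc a b,
    -(deriv (deriv u) x) = lam * u x * (1 + κ * (deriv u x) ^ 2) ^ ((3 : ℝ) / 2))

/-- `u` is a solution of problem (P) on `[0,1]` with Dirichlet boundary conditions. -/
def SolP (κ lam : ℝ) (u : ℝ → ℝ) : Prop :=
  SolODE κ lam u 0 1 ∧ u 0 = 0 ∧ u 1 = 0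

/-- `u` is an `S⁺ₙ`-solution of problem (P): a nontrivial solution with exactly
`n - 1` zeros in `(0,1)`, all zeros in `[0,1]` simple, and positive near `0`. -/
def SPlus (κ lam : ℝ) (n : ℕ) (u : ℝ → ℝ) : Prop :=
  SolP κ lam u ∧
  (∃ x ∈ Set.Icc (0 : ℝ) 1, u x ≠ 0) ∧
  {x ∈ Set.Ioo (0 : ℝ) 1 | u x = 0}.ncard = n - 1 ∧
  (∀ τ ∈ Set.Icc (0 : ℝ) 1, u τ = 0 → deriv u τ ≠ 0) ∧
  (∃ δ > 0, ∀ x ∈ Set.Ioo (0 : ℝ) δ, 0 < u x)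

/-- The constant `B = ∫₀¹ dθ/√(θ⁻⁴ - 1)`. -/
def Bconst : ℝ := ∫ θ in (0 : ℝ)..1, 1 / Real.sqrt ((θ ^ 4)⁻¹ - 1)

/-- The sup-norm of `u` over `[0,1]`. -/
def supNorm (u : ℝ → ℝ) : ℝ := sSup ((fun x => |u x|) '' Set.Icc (0 : ℝ) 1)

/-- The time map `J(λ, ξ) = √(-κ) ∫₀¹ ξ/√(1 - (1 - λκξ²(1-θ²)/2)⁻²) dθ`. -/
def Jmap (κ lam ξ : ℝ) : ℝ :=
  Real.sqrt (-κ) *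
    ∫ θ in (0 : ℝ)..1,
      ξ / Real.sqrt (1 - ((1 - lam * κ / 2 * ξ ^ 2 * (1 - θ ^ 2))⁻¹) ^ 2)

def Fvec (κ lam : ℝ) (p : ℝ × ℝ) : ℝ × ℝ :=
  (p.2, -(lam * p.1 * (1 + κ * p.2 ^ 2) ^ ((3:ℝ)/2)))

lemma Fvec_contDiff {κ : ℝ} (hκ : 0 < κ) (lam : ℝ) : ContDiff ℝ 1 (Fvec κ lam) := by
  have h1 : ContDiff ℝ 1 (fun p : ℝ × ℝ => 1 + κ * p.2 ^ 2) :=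
    contDiff_const.add (contDiff_const.mul (contDiff_snd.pow 2))
  have h2 : ContDiff ℝ 1 (fun p : ℝ × ℝ => (1 + κ * p.2 ^ 2) ^ ((3:ℝ)/2)) := by
    rw [contDiff_iff_contDiffAt]
    intro p
    refine h1.contDiffAt.rpow_const_of_ne (ne_of_gt ?_)
    positivity
  exact contDiff_snd.prodMk (((contDiff_const.mul contDiff_fst).mul h2).neg)

lemma Fvec_lip {κ : ℝ} (hκ : 0 < κ) (lam R : ℝ) :
    ∃ K : NNReal, LipschitzOnWith K (Fvec κ lam) (Metric.closedBall 0 R) := by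
  have hF := Fvec_contDiff hκ lam
  have hcont : ContinuousOn (fun p => ‖fderiv ℝ (Fvec κ lam) p‖) (Metric.closedBall (0:ℝ×ℝ) R) :=
    ((hF.continuous_fderiv one_ne_zero).norm).continuousOn
  obtain ⟨C, hC⟩ := (isCompact_closedBall (0:ℝ×ℝ) R).exists_bound_of_continuousOn hcont
  refine ⟨(max C 0).toNNReal, ?_⟩
  apply (convex_closedBall _ _).lipschitzOnWith_of_nnnorm_fderiv_le
    (fun x _ => (hF.differentiable one_ne_zero).differentiableAt)
    (fun x hx => ?_)
  rw [← NNReal.coe_le_coe, coe_nnnorm, Real.coe_toNNReal _ (le_max_right C 0)]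
  exact le_trans (le_trans (le_abs_self _) (hC x hx)) (le_max_left _ _)

lemma ode_unique {κ : ℝ} (hκ : 0 < κ) (lam : ℝ) {a b t₀ : ℝ} (ht₀ : t₀ ∈ Icc a b)
    {p q : ℝ → ℝ × ℝ}
    (hp : ∀ t ∈ Icc a b, HasDerivAt p (Fvec κ lam (p t)) t)
    (hq : ∀ t ∈ Icc a b, HasDerivAt q (Fvec κ lam (q t)) t)
    (h0 : p t₀ = q t₀) : ∀ t ∈ Icc a b, p t = q t := by
  have hab : a ≤ b := le_trans ht₀.1 ht₀.2
  have hpc : ContinuousOn p (Icc a b) := fun x hx => (hp x hx).continuousAt.continuousWithinAt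
  have hqc : ContinuousOn q (Icc a b) := fun x hx => (hq x hx).continuousAt.continuousWithinAt
  obtain ⟨R₁, hR₁⟩ := (isCompact_Icc).exists_bound_of_continuousOn hpc.norm
  obtain ⟨R₂, hR₂⟩ := (isCompact_Icc).exists_bound_of_continuousOn hqc.norm
  set R := max R₁ R₂ with hR
  obtain ⟨K, hK⟩ := Fvec_lip hκ lam R
  have hps : ∀ t ∈ Icc a b, p t ∈ Metric.closedBall (0:ℝ×ℝ) R := fun t ht => by
    simp only [Metric.mem_closedBall, dist_zero_right]
    exact le_trans (le_trans (le_abs_self _) (hR₁ t ht)) (le_max_left _ _)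
  have hqs : ∀ t ∈ Icc a b, q t ∈ Metric.closedBall (0:ℝ×ℝ) R := fun t ht => by
    simp only [Metric.mem_closedBall, dist_zero_right]
    exact le_trans (le_trans (le_abs_self _) (hR₂ t ht)) (le_max_right _ _)
  intro t ht
  rcases le_total t t₀ with h | h
  · -- use left version on [a, t₀]
    have sub : Icc a t₀ ⊆ Icc a b := Icc_subset_Icc le_rfl ht₀.2
    have := ODE_solution_unique_of_mem_Icc_left
      (v := fun _ x => Fvec κ lam x) (s := fun _ => Metric.closedBall (0:ℝ×ℝ) R)
      (fun _ _ => hK) (hpc.mono sub)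
      (fun s hs => (hp s (sub (Ioc_subset_Icc_self hs))).hasDerivWithinAt)
      (fun s hs => hps s (sub (Ioc_subset_Icc_self hs)))
      (hqc.mono sub)
      (fun s hs => (hq s (sub (Ioc_subset_Icc_self hs))).hasDerivWithinAt)
      (fun s hs => hqs s (sub (Ioc_subset_Icc_self hs))) h0
    exact this ⟨ht.1, h⟩
  · have sub : Icc t₀ b ⊆ Icc a b := Icc_subset_Icc ht₀.1 le_rfl
    have := ODE_solution_unique_of_mem_Icc_right
      (v := fun _ x => Fvec κ lam x) (s := fun _ => Metric.closedBall (0:ℝ×ℝ) R)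
      (fun _ _ => hK) (hpc.mono sub)
      (fun s hs => (hp s (sub (Ico_subset_Icc_self hs))).hasDerivWithinAt)
      (fun s hs => hps s (sub (Ico_subset_Icc_self hs)))
      (hqc.mono sub)
      (fun s hs => (hq s (sub (Ico_subset_Icc_self hs))).hasDerivWithinAt)
      (fun s hs => hqs s (sub (Ico_subset_Icc_self hs))) h0
    exact this ⟨h, ht.2⟩



lemma deriv_le_zero_left {f : ℝ → ℝ} {f' x₀ c : ℝ} (hc : c < x₀) (hf : HasDerivAt f f' x₀)
    (h : ∀ y ∈ Ico c x₀, f x₀ ≤ f y) : f' ≤ 0 := by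
  have ht : Tendsto (slope f x₀) (𝓝[<] x₀) (𝓝 f') :=
    (hasDerivAt_iff_tendsto_slope.mp hf).mono_left
      (nhdsWithin_mono _ fun y hy => ne_of_lt hy)
  refine le_of_tendsto ht ?_
  filter_upwards [Ioo_mem_nhdsLT_of_mem ⟨hc, le_rfl⟩] with y hy
  rw [slope_def_field]
  apply div_nonpos_of_nonneg_of_nonpos
  · linarith [h y ⟨hy.1.le, hy.2⟩]
  · linarith [hy.2]

lemma deriv_ge_zero_right {f : ℝ → ℝ} {f' x₀ c : ℝ} (hc : x₀ < c) (hf : HasDerivAt f f' x₀)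
    (h : ∀ y ∈ Ioc x₀ c, f x₀ ≤ f y) : 0 ≤ f' := by
  have ht : Tendsto (slope f x₀) (𝓝[>] x₀) (𝓝 f') :=
    (hasDerivAt_iff_tendsto_slope.mp hf).mono_left
      (nhdsWithin_mono _ fun y hy => ne_of_gt hy)
  refine ge_of_tendsto ht ?_
  filter_upwards [Ioo_mem_nhdsGT_of_mem ⟨le_rfl, hc⟩] with y hy
  rw [slope_def_field]
  apply div_nonneg
  · linarith [h y ⟨hy.1, hy.2.le⟩]
  · linarith [hy.1]

lemma eventually_pos_right {f : ℝ → ℝ} {f' x₀ : ℝ} (hf : HasDerivAt f f' x₀)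
    (h0 : f x₀ = 0) (hf' : 0 < f') : ∀ᶠ y in 𝓝[>] x₀, 0 < f y := by
  have ht : Tendsto (slope f x₀) (𝓝[>] x₀) (𝓝 f') :=
    (hasDerivAt_iff_tendsto_slope.mp hf).mono_left
      (nhdsWithin_mono _ fun y hy => ne_of_gt hy)
  filter_upwards [ht.eventually (eventually_gt_nhds hf'), self_mem_nhdsWithin] with y hs hy
  rw [slope_def_field, h0, sub_zero] at hs
  have hyx : (0:ℝ) < y - x₀ := by simpa using sub_pos.mpr (mem_Ioi.mp hy)
  have h2 := mul_pos hs hyx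
  rwa [div_mul_cancel₀ _ (ne_of_gt hyx)] at h2

lemma energy {κ lam : ℝ} (hκ : 0 < κ) {u : ℝ → ℝ} {a b : ℝ}
    (hu : SolODE κ lam u a b) :
    ∀ x ∈ Icc a b,
      (Real.sqrt (1 + κ * (deriv u x) ^ 2))⁻¹ - κ * lam / 2 * (u x) ^ 2
        = (Real.sqrt (1 + κ * (deriv u a) ^ 2))⁻¹ - κ * lam / 2 * (u a) ^ 2 := by
  obtain ⟨hdu, hdv, hcw, hpos, hode⟩ := hu
  have key : ∀ x ∈ Icc a b,
      HasDerivAt (fun y => (Real.sqrt (1 + κ * (deriv u y) ^ 2))⁻¹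
        - κ * lam / 2 * (u y) ^ 2) 0 x := by
    intro x hx
    have hX : 0 < 1 + κ * (deriv u x) ^ 2 := hpos x hx
    have hS : 0 < Real.sqrt (1 + κ * (deriv u x) ^ 2) := Real.sqrt_pos.mpr hX
    have h1 := (hasDerivAt_const x (1:ℝ)).add
      (((hdv x hx).hasDerivAt.pow 2).const_mul κ)
    have h2 := (h1.sqrt hX.ne').inv hS.ne'
    have h3 := ((hdu x hx).hasDerivAt.pow 2).const_mul (κ * lam / 2)
    have h4 := h2.sub h3
    refine h4.congr_deriv (Eq.symm ?_)
    have hode' : deriv (deriv u) x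
        = -(lam * u x * (1 + κ * deriv u x ^ 2) ^ ((3:ℝ)/2)) := by
      linarith [hode x hx]
    have h32 : (1 + κ * deriv u x ^ 2) ^ ((3:ℝ)/2)
        = (1 + κ * deriv u x ^ 2) * Real.sqrt (1 + κ * deriv u x ^ 2) := by
      rw [show (3:ℝ)/2 = 1 + 1/2 by norm_num, Real.rpow_add hX, Real.rpow_one,
        ← Real.sqrt_eq_rpow]
    have hs2 : Real.sqrt (1 + κ * deriv u x ^ 2) ^ 2 = 1 + κ * deriv u x ^ 2 :=
      Real.sq_sqrt hX.le
    rw [hode', h32]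
    simp only [Pi.add_apply, Pi.pow_apply]
    set S := Real.sqrt (1 + κ * deriv u x ^ 2)
    rw [← hs2]
    field_simp
    ring
  have hcont : ContinuousOn (fun y => (Real.sqrt (1 + κ * (deriv u y) ^ 2))⁻¹
      - κ * lam / 2 * (u y) ^ 2) (Icc a b) :=
    fun x hx => ((key x hx).continuousAt).continuousWithinAt
  intro x hx
  exact constant_of_has_deriv_right_zero hcont
    (fun y hy => ((key y (Ico_subset_Icc_self hy)).hasDerivWithinAt)) x hx

set_option maxHeartbeats 1000000 in
lemma speed_lt {κ lam ξ₁ ξ₂ a₁ a₂ θ : ℝ} (hκ : 0 < κ) (hlam : 0 < lam)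
    (hξ1 : 0 < ξ₁) (h12 : ξ₁ < ξ₂) (hθ0 : 0 ≤ θ) (hθ1 : θ < 1)
    (ha₁ : 0 < a₁) (ha₂ : 0 < a₂)
    (he₁ : (Real.sqrt (1 + κ * a₁ ^ 2))⁻¹ = 1 - κ * lam / 2 * (ξ₁ ^ 2 - (ξ₁ * θ) ^ 2))
    (he₂ : (Real.sqrt (1 + κ * a₂ ^ 2))⁻¹ = 1 - κ * lam / 2 * (ξ₂ ^ 2 - (ξ₂ * θ) ^ 2)) :
    a₁ / ξ₁ < a₂ / ξ₂ := by
  have hξ2 : 0 < ξ₂ := hξ1.trans h12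
  set s := κ * lam / 2 * (1 - θ ^ 2) with hs
  have hθsq : θ ^ 2 < 1 := by nlinarith
  have h1θ : 0 < 1 - θ ^ 2 := by nlinarith
  have hspos : 0 < s := by rw [hs]; exact mul_pos (by positivity) h1θ
  have key : ∀ ξ aa : ℝ, 0 < ξ → 0 < aa →
      (Real.sqrt (1 + κ * aa ^ 2))⁻¹ = 1 - κ * lam / 2 * (ξ ^ 2 - (ξ * θ) ^ 2) →
      s * ξ ^ 2 < 1 ∧ (1 + κ * aa ^ 2) * (1 - s * ξ ^ 2) ^ 2 = 1 := by
    intro ξ aa hξ haa he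
    have hX : 0 < 1 + κ * aa ^ 2 := by positivity
    have hS : 0 < Real.sqrt (1 + κ * aa ^ 2) := Real.sqrt_pos.mpr hX
    have e : 1 - κ * lam / 2 * (ξ ^ 2 - (ξ * θ) ^ 2) = 1 - s * ξ ^ 2 := by rw [hs]; ring
    rw [e] at he
    have hinv : 0 < (Real.sqrt (1 + κ * aa ^ 2))⁻¹ := inv_pos.mpr hS
    have h1 : s * ξ ^ 2 < 1 := by rw [he] at hinv; linarith
    have h2 : Real.sqrt (1 + κ * aa ^ 2) * (1 - s * ξ ^ 2) = 1 := by
      rw [← he]; field_simp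
    have h3 := Real.sq_sqrt hX.le
    refine ⟨h1, ?_⟩
    linear_combination (Real.sqrt (1 + κ * aa ^ 2) * (1 - s * ξ ^ 2) + 1) * h2
      - (1 - s * ξ ^ 2) ^ 2 * h3
  obtain ⟨ht₁, hA₁⟩ := key ξ₁ a₁ hξ1 ha₁ he₁
  obtain ⟨ht₂, hA₂⟩ := key ξ₂ a₂ hξ2 ha₂ he₂
  have htlt : s * ξ₁ ^ 2 < s * ξ₂ ^ 2 := by nlinarith [mul_pos (mul_pos hspos (sub_pos.mpr h12)) (show (0:ℝ) < ξ₁ + ξ₂ by linarith)]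
  have ht₁0 : 0 < s * ξ₁ ^ 2 := by positivity
  have hcore : (2 - s * ξ₁ ^ 2) * (1 - s * ξ₂ ^ 2) ^ 2
      < (2 - s * ξ₂ ^ 2) * (1 - s * ξ₁ ^ 2) ^ 2 := by
    have hq : 0 < 3 - 2 * (s * ξ₁ ^ 2) - 2 * (s * ξ₂ ^ 2) + (s * ξ₁ ^ 2) * (s * ξ₂ ^ 2) := by
      nlinarith [mul_pos (sub_pos.mpr ht₁) (sub_pos.mpr ht₂)]
    nlinarith [mul_pos (sub_pos.mpr htlt) hq]
  have hfac : 0 < (1 - s * ξ₁ ^ 2) ^ 2 * (1 - s * ξ₂ ^ 2) ^ 2 := by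
    have := sub_pos.mpr ht₁; have := sub_pos.mpr ht₂; positivity
  have hmul : κ * a₁ ^ 2 * ξ₂ ^ 2 * ((1 - s * ξ₁ ^ 2) ^ 2 * (1 - s * ξ₂ ^ 2) ^ 2)
      < κ * a₂ ^ 2 * ξ₁ ^ 2 * ((1 - s * ξ₁ ^ 2) ^ 2 * (1 - s * ξ₂ ^ 2) ^ 2) := by
    have L : κ * a₁ ^ 2 * ξ₂ ^ 2 * ((1 - s * ξ₁ ^ 2) ^ 2 * (1 - s * ξ₂ ^ 2) ^ 2)
        = s * ξ₁ ^ 2 * ξ₂ ^ 2 * ((2 - s * ξ₁ ^ 2) * (1 - s * ξ₂ ^ 2) ^ 2) := by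
      linear_combination (ξ₂ ^ 2 * (1 - s * ξ₂ ^ 2) ^ 2) * hA₁
    have R : κ * a₂ ^ 2 * ξ₁ ^ 2 * ((1 - s * ξ₁ ^ 2) ^ 2 * (1 - s * ξ₂ ^ 2) ^ 2)
        = s * ξ₁ ^ 2 * ξ₂ ^ 2 * ((2 - s * ξ₂ ^ 2) * (1 - s * ξ₁ ^ 2) ^ 2) := by
      linear_combination (ξ₁ ^ 2 * (1 - s * ξ₁ ^ 2) ^ 2) * hA₂
    rw [L, R]
    have hpos2 : 0 < s * ξ₁ ^ 2 * ξ₂ ^ 2 := by positivity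
    exact (mul_lt_mul_iff_right₀ hpos2).mpr hcore
  have hsq : κ * a₁ ^ 2 * ξ₂ ^ 2 < κ * a₂ ^ 2 * ξ₁ ^ 2 :=
    lt_of_mul_lt_mul_right (by linarith [hmul]) hfac.le
  rw [div_lt_div_iff₀ hξ1 hξ2]
  by_contra hcon
  push_neg at hcon
  have h6 : (a₂ * ξ₁) ^ 2 ≤ (a₁ * ξ₂) ^ 2 := by
    nlinarith [mul_pos ha₂ hξ1, sub_nonneg.mpr hcon]
  nlinarith [mul_le_mul_of_nonneg_left h6 hκ.le]

set_option maxHeartbeats 1000000 in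
lemma struct {κ lam : ℝ} (hκ : 0 < κ) (hlam : 0 < lam) {n : ℕ} (hn : 1 ≤ n)
    {u : ℝ → ℝ} (hu : SPlus κ lam n u) :
    0 < deriv u 0 ∧ deriv u (1/(2*(n:ℝ))) = 0 ∧ 0 < u (1/(2*(n:ℝ))) ∧
      StrictMonoOn u (Icc 0 (1/(2*(n:ℝ)))) ∧
      (∀ x, 0 ≤ x → x < 1/(2*(n:ℝ)) → 0 < deriv u x) := by
  obtain ⟨⟨hsol, hu0, hu1⟩, -, hcount, hsimple, δ, hδ, hpos⟩ := hu
  obtain ⟨hdu, hdv, hcw, hposode, hode⟩ := hsol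
  have hsol' : SolODE κ lam u 0 1 := ⟨hdu, hdv, hcw, hposode, hode⟩
  -- A : deriv u 0 > 0
  have hδ1 : 0 < min (δ/2) 1 := lt_min (by linarith) one_pos
  have hv0' : 0 ≤ deriv u 0 := by
    refine deriv_ge_zero_right hδ1 ((hdu 0 ⟨le_rfl, zero_le_one⟩).hasDerivAt) ?_
    intro y hy
    rw [hu0]
    exact (hpos y ⟨hy.1, lt_of_le_of_lt (hy.2.trans (min_le_left _ _)) (by linarith)⟩).le
  have hv0 : 0 < deriv u 0 :=
    hv0'.lt_of_ne (Ne.symm (hsimple 0 ⟨le_rfl, zero_le_one⟩ hu0))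
  -- B : first zero z
  have hZsub : ∀ x, x ∈ Ioc (0:ℝ) 1 → u x = 0 → min δ 1 ≤ x := by
    intro x hx hx0
    by_contra h
    push_neg at h
    exact absurd hx0 (ne_of_gt (hpos x ⟨hx.1, lt_of_lt_of_le h (min_le_left _ _)⟩))
  set Z := {x : ℝ | x ∈ Icc (min δ 1) 1 ∧ u x = 0} with hZdef
  have hmin01 : 0 < min δ 1 := lt_min hδ one_pos
  have hZ1 : (1:ℝ) ∈ Z := ⟨⟨hZsub 1 ⟨one_pos, le_rfl⟩ hu1, le_rfl⟩, hu1⟩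
  have hZsub01 : Icc (min δ 1) 1 ⊆ Icc (0:ℝ) 1 :=
    Icc_subset_Icc hmin01.le le_rfl
  have hZclosed : IsClosed Z := by
    have hcu : ContinuousOn u (Icc (min δ 1) 1) :=
      fun x hx => (hdu x (hZsub01 hx)).continuousAt.continuousWithinAt
    exact hcu.preimage_isClosed_of_isClosed isClosed_Icc isClosed_singleton
  have hbdd : BddBelow Z := ⟨min δ 1, fun x hx => hx.1.1⟩
  set z := sInf Z with hzdef
  have hzmem : z ∈ Z := hZclosed.csInf_mem ⟨1, hZ1⟩ hbdd
  have hz0 : 0 < z := lt_of_lt_of_le hmin01 hzmem.1.1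
  have hz1 : z ≤ 1 := hzmem.1.2
  have huz : u z = 0 := hzmem.2
  have hzmin : ∀ x ∈ Ioc (0:ℝ) 1, u x = 0 → z ≤ x :=
    fun x hx h0 => csInf_le hbdd ⟨⟨hZsub x hx h0, hx.2⟩, h0⟩
  have hIccz : Icc (0:ℝ) z ⊆ Icc (0:ℝ) 1 := Icc_subset_Icc le_rfl hz1
  have hupos : ∀ x ∈ Ioo (0:ℝ) z, 0 < u x := by
    intro x hx
    have hne0 : u x ≠ 0 := fun h =>
      absurd (hzmin x ⟨hx.1, hx.2.le.trans hz1⟩ h) (not_le.mpr hx.2)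
    rcases lt_or_gt_of_ne hne0 with hlt | hgt
    · exfalso
      set y := min (δ/2) (x/2) with hy
      have hy0 : 0 < y := lt_min (by linarith) (by linarith [hx.1])
      have hyx : y < x := lt_of_le_of_lt (min_le_right _ _) (by linarith [hx.1])
      have hyδ : y < δ := lt_of_le_of_lt (min_le_left _ _) (by linarith)
      have huy : 0 < u y := hpos y ⟨hy0, hyδ⟩
      have hcont : ContinuousOn u (Icc y x) := by
        intro w hw
        refine (hdu w ⟨by linarith [hw.1], ?_⟩).continuousAt.continuousWithinAt
        have := hw.2
        have := hx.2
        linarith [hz1]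
      obtain ⟨c, hcmem, hc0⟩ := intermediate_value_Ioo' hyx.le hcont ⟨hlt, huy⟩
      have hcz : z ≤ c := hzmin c ⟨hy0.trans hcmem.1, by linarith [hcmem.2, hx.2, hz1]⟩ hc0
      linarith [hcmem.2, hx.2]
    · exact hgt
  -- C : deriv u z < 0
  have hvz' : deriv u z ≤ 0 := by
    refine deriv_le_zero_left (half_lt_self hz0) ((hdu z (hIccz ⟨hz0.le, le_rfl⟩)).hasDerivAt) ?_
    intro y hy
    rw [huz]
    exact (hupos y ⟨lt_of_lt_of_le (half_pos hz0) hy.1, hy.2⟩).le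
  have hvz : deriv u z < 0 :=
    hvz'.lt_of_ne (hsimple z ⟨hz0.le, hz1⟩ huz)
  -- D : critical point via IVT
  have hcv : ContinuousOn (deriv u) (Icc 0 z) :=
    fun x hx => (hdv x (hIccz hx)).continuousAt.continuousWithinAt
  obtain ⟨τ₀, hτ₀mem, hτ₀⟩ := intermediate_value_Ioo' hz0.le hcv ⟨hvz, hv0⟩
  -- E : reflection gives z = 2τ for every critical τ
  have hrefl : ∀ τ ∈ Ioo (0:ℝ) z, deriv u τ = 0 → z = 2*τ := by
    intro τ hτ hvτ
    set m := min z (2*τ) with hm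
    have hτm : τ < m := lt_min hτ.2 (by linarith [hτ.1])
    have hlm : 2*τ - m < τ := by linarith
    have hml : m ≤ z := min_le_left _ _
    have hm2τ : m ≤ 2*τ := min_le_right _ _
    have hsub : Icc (2*τ - m) m ⊆ Icc (0:ℝ) 1 := by
      intro x hx
      exact ⟨by linarith [hx.1], by linarith [hx.2, hz1]⟩
    have hsym : ∀ t ∈ Icc (2*τ-m) m, (2*τ - t) ∈ Icc (2*τ-m) m :=
      fun t ht => ⟨by linarith [ht.2], by linarith [ht.1]⟩
    set p : ℝ → ℝ × ℝ := fun t => (u t, deriv u t) with hpdef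
    set q : ℝ → ℝ × ℝ := fun t => (u (2*τ - t), -deriv u (2*τ - t)) with hqdef
    have hp : ∀ t ∈ Icc (2*τ-m) m, HasDerivAt p (Fvec κ lam (p t)) t := by
      intro t ht
      have ht' := hsub ht
      have h1 := (hdu t ht').hasDerivAt
      have h2 := (hdv t ht').hasDerivAt
      have hode' : deriv (deriv u) t
          = -(lam * u t * (1 + κ * (deriv u t)^2) ^ ((3:ℝ)/2)) := by
        linarith [hode t ht']
      rw [hode'] at h2
      exact h1.prodMk h2
    have hq : ∀ t ∈ Icc (2*τ-m) m, HasDerivAt q (Fvec κ lam (q t)) t := by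
      intro t ht
      have ht2 := hsub (hsym t ht)
      have hneg : HasDerivAt (fun s : ℝ => 2*τ - s) (-1) t := by
        simpa using (hasDerivAt_id t).const_sub (2*τ)
      have h1 : HasDerivAt (fun s => u (2*τ - s)) (-(deriv u (2*τ - t))) t := by
        have := ((hdu _ ht2).hasDerivAt).comp t hneg
        exact this.congr_deriv (by ring)
      have h2 : HasDerivAt (fun s => -deriv u (2*τ - s)) (deriv (deriv u) (2*τ - t)) t := by
        have := (((hdv _ ht2).hasDerivAt).comp t hneg).neg
        exact this.congr_deriv (by ring)
      have hode' : deriv (deriv u) (2*τ-t)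
          = -(lam * u (2*τ-t) * (1 + κ * (deriv u (2*τ-t))^2) ^ ((3:ℝ)/2)) := by
        linarith [hode _ ht2]
      rw [hode'] at h2
      have := h1.prodMk h2
      have heq : Fvec κ lam (q t)
          = (-(deriv u (2*τ - t)), -(lam * u (2*τ-t) * (1 + κ * (deriv u (2*τ-t))^2) ^ ((3:ℝ)/2))) := by
        simp [Fvec, hqdef, neg_sq]
      rw [heq]
      exact this
    have hpq : p τ = q τ := by
      have h2ττ : 2*τ - τ = τ := by ring
      simp [hpdef, hqdef, hvτ, h2ττ]
    have heq := ode_unique hκ lam ⟨by linarith, hτm.le⟩ hp hq hpq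
    rcases lt_trichotomy (2*τ) z with hlt | he | hgt
    · exfalso
      have hm2 : m = 2*τ := min_eq_right hlt.le
      have h00 : (0:ℝ) ∈ Icc (2*τ-m) m := ⟨by linarith, by linarith [hτ.1]⟩
      have := congrArg Prod.fst (heq 0 h00)
      simp [hpdef, hqdef] at this
      have h2τ : 0 < u (2*τ) := hupos (2*τ) ⟨by linarith [hτ.1], hlt⟩
      rw [hu0] at this
      linarith [this, h2τ]
    · linarith
    · exfalso
      have hm2 : m = z := min_eq_left hgt.le
      have hz2 : z ∈ Icc (2*τ-m) m := ⟨by rw [hm2]; linarith [hτ.2], by rw [hm2]⟩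
      have := congrArg Prod.fst (heq z hz2)
      simp [hpdef, hqdef] at this
      have h2τ : 0 < u (2*τ - z) := hupos (2*τ - z) ⟨by linarith, by linarith [hτ.2]⟩
      rw [huz] at this
      linarith [this, h2τ]
  have hzτ : z = 2*τ₀ := hrefl τ₀ hτ₀mem hτ₀
  have huniq : ∀ σ ∈ Ioo (0:ℝ) z, deriv u σ = 0 → σ = z/2 :=
    fun σ hσ h => by linarith [hrefl σ hσ h]
  -- G : deriv u > 0 on [0, z/2)
  have hvpos : ∀ x, 0 ≤ x → x < z/2 → 0 < deriv u x := by
    intro x hx0 hxlt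
    rcases eq_or_lt_of_le hx0 with he | hx0'
    · rw [← he]; exact hv0
    have hne : deriv u x ≠ 0 := fun h => by
      have := huniq x ⟨hx0', by linarith⟩ h
      linarith
    rcases lt_or_gt_of_ne hne with hlt | hgt
    · exfalso
      obtain ⟨σ, hσmem, hσ⟩ := intermediate_value_Ioo' hx0'.le
        (hcv.mono (Icc_subset_Icc le_rfl (by linarith))) ⟨hlt, hv0⟩
      have := huniq σ ⟨hσmem.1, by linarith [hσmem.2]⟩ hσ
      linarith [hσmem.2]
    · exact hgt
  -- H : strict mono on [0, z/2]
  have hmono : StrictMonoOn u (Icc 0 (z/2)) := by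
    refine strictMonoOn_of_deriv_pos (convex_Icc _ _) ?_ ?_
    · intro x hx
      exact (hdu x (hIccz ⟨hx.1, by linarith [hx.2]⟩)).continuousAt.continuousWithinAt
    · intro x hx
      rw [interior_Icc] at hx
      exact hvpos x hx.1.le hx.2
  have hvhalf : deriv u (z/2) = 0 := by
    rw [show z/2 = τ₀ by linarith]
    exact hτ₀
  have hξpos : 0 < u (z/2) := by
    have := hmono ⟨le_rfl, by linarith⟩ ⟨by linarith, le_rfl⟩ (by linarith)
    rwa [hu0] at this
  -- I : deriv u z = -deriv u 0
  have hE := energy hκ hsol'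
  have hvzneg : deriv u z = -(deriv u 0) := by
    have h0z := hE z ⟨hz0.le, hz1⟩
    rw [huz, hu0] at h0z
    have hXz : 0 < 1 + κ * (deriv u z)^2 := by positivity
    have hX0 : 0 < 1 + κ * (deriv u 0)^2 := by positivity
    have hinveq : (Real.sqrt (1 + κ * (deriv u z)^2))⁻¹
        = (Real.sqrt (1 + κ * (deriv u 0)^2))⁻¹ := by linarith
    have hsqrteq : Real.sqrt (1 + κ * (deriv u z)^2)
        = Real.sqrt (1 + κ * (deriv u 0)^2) := inv_injective hinveq
    have hsq : (deriv u z)^2 = (deriv u 0)^2 := by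
      have e1 := Real.sq_sqrt hXz.le
      have e2 := Real.sq_sqrt hX0.le
      rw [hsqrteq] at e1
      have heq2 : 1 + κ * (deriv u z)^2 = 1 + κ * (deriv u 0)^2 := by
        linear_combination e2 - e1
      exact mul_left_cancel₀ hκ.ne' (by linarith)
    rcases sq_eq_sq_iff_eq_or_eq_neg.mp hsq with h | h
    · exfalso; rw [h] at hvz; linarith
    · exact h
  -- J : anti-periodicity
  have hanti : ∀ x ∈ Icc (0:ℝ) (1-z), u (x+z) = -u x := by
    have hA : ∀ t ∈ Icc (0:ℝ) (1-z), HasDerivAt (fun s => (u s, deriv u s))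
        (Fvec κ lam (u t, deriv u t)) t := by
      intro t ht
      have ht' : t ∈ Icc (0:ℝ) 1 := ⟨ht.1, by linarith [ht.2]⟩
      have h1 := (hdu t ht').hasDerivAt
      have h2 := (hdv t ht').hasDerivAt
      have hode' : deriv (deriv u) t
          = -(lam * u t * (1 + κ * (deriv u t)^2) ^ ((3:ℝ)/2)) := by
        linarith [hode t ht']
      rw [hode'] at h2
      exact h1.prodMk h2
    have hB : ∀ t ∈ Icc (0:ℝ) (1-z), HasDerivAt (fun s => (-u (s+z), -deriv u (s+z)))
        (Fvec κ lam (-u (t+z), -deriv u (t+z))) t := by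
      intro t ht
      have ht2 : t + z ∈ Icc (0:ℝ) 1 := ⟨by linarith [ht.1, hz0], by linarith [ht.2]⟩
      have hshift : HasDerivAt (fun s : ℝ => s + z) 1 t := (hasDerivAt_id t).add_const z
      have h1 : HasDerivAt (fun s => -u (s+z)) (-(deriv u (t+z))) t := by
        have := (((hdu _ ht2).hasDerivAt).comp t hshift).neg
        exact this.congr_deriv (by ring)
      have h2 : HasDerivAt (fun s => -deriv u (s+z)) (-(deriv (deriv u) (t+z))) t := by
        have := (((hdv _ ht2).hasDerivAt).comp t hshift).neg
        exact this.congr_deriv (by ring)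
      have hode' : -(deriv (deriv u) (t+z))
          = lam * u (t+z) * (1 + κ * (deriv u (t+z))^2) ^ ((3:ℝ)/2) := hode _ ht2
      rw [hode'] at h2
      have heqF : Fvec κ lam (-u (t+z), -deriv u (t+z))
          = (-(deriv u (t+z)), lam * u (t+z) * (1 + κ * (deriv u (t+z))^2) ^ ((3:ℝ)/2)) := by
        simp [Fvec, neg_sq]
      rw [heqF]
      exact h1.prodMk h2
    have hinit : (u 0, deriv u 0) = (-u (0+z), -deriv u (0+z)) := by
      rw [zero_add, hu0, huz, hvzneg]
      norm_num
    have heq := ode_unique hκ lam (t₀ := 0) ⟨le_rfl, by linarith⟩ hA hB hinit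
    intro x hx
    have := congrArg Prod.fst (heq x hx)
    simp at this
    linarith [this]
  -- K : zeros are exactly multiples of z
  have hiter : ∀ k : ℕ, ∀ x : ℝ, (k:ℝ)*z < x → x ≤ ((k:ℝ)+1)*z → x ≤ 1 →
      (u x = 0 ↔ x = ((k:ℝ)+1)*z) := by
    intro k
    induction k with
    | zero =>
      intro x h1 h2 h3
      push_cast at h1 h2 ⊢
      rw [zero_mul] at h1
      rw [zero_add, one_mul] at h2 ⊢
      constructor
      · intro h0
        exact le_antisymm h2 (hzmin x ⟨h1, h3⟩ h0)
      · intro h; rw [h]; exact huz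
    | succ k ih =>
      intro x h1 h2 h3
      push_cast at h1 h2
      have hy1 : (k:ℝ)*z < x - z := by linarith
      have hy2 : x - z ≤ ((k:ℝ)+1)*z := by linarith
      have hy3 : x - z ≤ 1 := by linarith [hz0]
      have hx0 : (0:ℝ) ≤ x - z := by
        have : (0:ℝ) ≤ (k:ℝ)*z := by positivity
        linarith
      have hxz : x - z ∈ Icc (0:ℝ) (1-z) := ⟨hx0, by linarith⟩
      have hux := hanti _ hxz
      rw [sub_add_cancel] at hux
      rw [hux, neg_eq_zero, ih _ hy1 hy2 hy3]
      push_cast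
      constructor <;> intro h <;> linarith
  -- L : 1 is a multiple of z
  have hc1 : (0:ℝ) < 1/z := by positivity
  have hceil1 : 1 ≤ ⌈1/z⌉₊ := Nat.one_le_ceil_iff.mpr hc1
  set k₀ := ⌈1/z⌉₊ - 1 with hk₀
  have hk₀c : (k₀:ℝ) = (⌈1/z⌉₊:ℝ) - 1 := by
    rw [hk₀]
    push_cast [Nat.cast_sub hceil1]
    ring
  have hlow : (k₀:ℝ)*z < 1 := by
    have := Nat.ceil_lt_add_one hc1.le
    rw [hk₀c]
    have h2 : (⌈1/z⌉₊:ℝ) - 1 < 1/z := by linarith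
    calc ((⌈1/z⌉₊:ℝ) - 1) * z < (1/z) * z := by
          exact mul_lt_mul_of_pos_right h2 hz0
      _ = 1 := by field_simp
  have hhigh : 1 ≤ ((k₀:ℝ)+1)*z := by
    have := Nat.le_ceil (1/z)
    rw [hk₀c]
    have h2 : 1/z ≤ (⌈1/z⌉₊:ℝ) := this
    calc (1:ℝ) = (1/z) * z := by field_simp
      _ ≤ (⌈1/z⌉₊:ℝ) * z := mul_le_mul_of_nonneg_right h2 hz0.le
      _ = ((⌈1/z⌉₊:ℝ) - 1 + 1) * z := by ring
  have hNz : (1:ℝ) = ((k₀:ℝ)+1)*z := (hiter k₀ 1 hlow hhigh le_rfl).mp hu1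
  set N := k₀ + 1 with hNdef
  have hNz' : ((N:ℕ):ℝ)*z = 1 := by
    rw [hNdef]
    push_cast
    linarith [hNz]
  have hN1 : 1 ≤ N := by omega
  -- M : zero set and count
  have hinj : Function.Injective (fun j : ℕ => (j:ℝ)*z) := by
    intro a b h
    simp only at h
    have := mul_right_cancel₀ hz0.ne' h
    exact_mod_cast this
  have hset : {x ∈ Ioo (0:ℝ) 1 | u x = 0} = (fun j : ℕ => (j:ℝ)*z) '' (Set.Ioo 0 N) := by
    ext x
    simp only [mem_setOf_eq, mem_image, Set.mem_Ioo]
    constructor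
    · rintro ⟨⟨hx0, hx1⟩, hxz⟩
      have hcx : (0:ℝ) < x/z := by positivity
      have hceilx : 1 ≤ ⌈x/z⌉₊ := Nat.one_le_ceil_iff.mpr hcx
      set k := ⌈x/z⌉₊ - 1 with hkdef
      have hkc : (k:ℝ) = (⌈x/z⌉₊:ℝ) - 1 := by
        rw [hkdef]; push_cast [Nat.cast_sub hceilx]; ring
      have hlowx : (k:ℝ)*z < x := by
        have := Nat.ceil_lt_add_one hcx.le
        rw [hkc]
        have h2 : (⌈x/z⌉₊:ℝ) - 1 < x/z := by linarith
        calc ((⌈x/z⌉₊:ℝ) - 1) * z < (x/z) * z := mul_lt_mul_of_pos_right h2 hz0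
          _ = x := by field_simp
      have hhighx : x ≤ ((k:ℝ)+1)*z := by
        have h2 : x/z ≤ (⌈x/z⌉₊:ℝ) := Nat.le_ceil _
        rw [hkc]
        calc x = (x/z) * z := by field_simp
          _ ≤ (⌈x/z⌉₊:ℝ) * z := mul_le_mul_of_nonneg_right h2 hz0.le
          _ = ((⌈x/z⌉₊:ℝ) - 1 + 1) * z := by ring
      have := (hiter k x hlowx hhighx hx1.le).mp hxz
      refine ⟨k+1, ⟨by omega, ?_⟩, ?_⟩
      · -- k+1 < N
        have hxN : x < ((N:ℕ):ℝ)*z := by rw [hNz']; exact hx1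
        rw [this] at hxN
        have : ((k:ℝ)+1) < (N:ℝ) := lt_of_mul_lt_mul_right hxN hz0.le
        exact_mod_cast this
      · push_cast
        linarith [this]
    · rintro ⟨j, ⟨hj0, hjN⟩, rfl⟩
      have hj0' : (0:ℝ) < (j:ℝ) := by exact_mod_cast hj0
      have hjN' : (j:ℝ) < (N:ℝ) := by exact_mod_cast hjN
      have hjz1 : (j:ℝ)*z < 1 := by
        rw [← hNz']
        exact mul_lt_mul_of_pos_right hjN' hz0
      refine ⟨⟨by positivity, hjz1⟩, ?_⟩
      have hj1 : 1 ≤ j := hj0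
      have hcast : ((j-1:ℕ):ℝ) = (j:ℝ) - 1 := by
        push_cast [Nat.cast_sub hj1]; ring
      refine (hiter (j-1) ((j:ℝ)*z) ?_ ?_ hjz1.le).mpr ?_
      · rw [hcast]; nlinarith [hz0]
      · rw [hcast]; exact le_of_eq (by ring)
      · rw [hcast]; ring
  have hcard : {x ∈ Ioo (0:ℝ) 1 | u x = 0}.ncard = N - 1 := by
    rw [hset, Set.ncard_image_of_injective _ hinj]
    rw [← Finset.coe_Ioo, Set.ncard_coe_finset, Nat.card_Ioo]
    omega
  have hNn : N = n := by omega
  have hzn : ((n:ℕ):ℝ) * z = 1 := by rw [← hNn]; exact hNz'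
  have hnpos : (0:ℝ) < (n:ℝ) := by exact_mod_cast hn
  have hT : z/2 = 1/(2*(n:ℝ)) := by
    field_simp
    linarith [hzn]
  rw [← hT]
  exact ⟨hv0, hvhalf, hξpos, hmono, hvpos⟩

lemma traj {κ lam : ℝ} {u : ℝ → ℝ} (hsol : SolODE κ lam u 0 1) :
    ∀ t ∈ Icc (0:ℝ) 1,
      HasDerivAt (fun s => (u s, deriv u s)) (Fvec κ lam (u t, deriv u t)) t := by
  obtain ⟨hdu, hdv, hcw, hposode, hode⟩ := hsol
  intro t ht
  have h1 := (hdu t ht).hasDerivAt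
  have h2 := (hdv t ht).hasDerivAt
  have hode' : deriv (deriv u) t
      = -(lam * u t * (1 + κ * (deriv u t)^2) ^ ((3:ℝ)/2)) := by
    linarith [hode t ht]
  rw [hode'] at h2
  exact h1.prodMk h2

set_option maxHeartbeats 1000000 in
lemma main_aux {κ lam : ℝ} (hκ : 0 < κ) (hlam : 0 < lam) {n : ℕ} (hn : 1 ≤ n)
    {u₁ u₂ : ℝ → ℝ} (hu₁ : SPlus κ lam n u₁) (hu₂ : SPlus κ lam n u₂)
    (hle : u₁ (1/(2*(n:ℝ))) ≤ u₂ (1/(2*(n:ℝ)))) :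
    ∀ x ∈ Icc (0:ℝ) 1, u₁ x = u₂ x := by
  obtain ⟨hv01, hvT1, hξp1, hmono1, hvpos1⟩ := struct hκ hlam hn hu₁
  obtain ⟨hv02, hvT2, hξp2, hmono2, hvpos2⟩ := struct hκ hlam hn hu₂
  have hnpos : (0:ℝ) < (n:ℝ) := by exact_mod_cast hn
  set T := 1/(2*(n:ℝ)) with hTdef
  have hT0 : 0 < T := by rw [hTdef]; positivity
  have hT1 : T ≤ 1 := by
    rw [hTdef]
    rw [div_le_one (by positivity)]
    have : (1:ℝ) ≤ (n:ℝ) := by exact_mod_cast hn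
    linarith
  obtain ⟨⟨hsol₁, hu10, hu11⟩, -⟩ := id hu₁
  obtain ⟨⟨hsol₂, hu20, hu21⟩, -⟩ := id hu₂
  obtain ⟨hdu₁, hdv₁, -, -, -⟩ := id hsol₁
  obtain ⟨hdu₂, hdv₂, -, -, -⟩ := id hsol₂
  set ξ₁ := u₁ T with hξ₁def
  set ξ₂ := u₂ T with hξ₂def
  -- energy in amplitude form
  have hen : ∀ (w : ℝ → ℝ), SolODE κ lam w 0 1 → w 0 = 0 → deriv w T = 0 →
      ∀ x ∈ Icc (0:ℝ) T,
      (Real.sqrt (1 + κ * (deriv w x)^2))⁻¹ = 1 - κ * lam / 2 * ((w T)^2 - (w x)^2) := by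
    intro w hsol hw0 hvT x hx
    have hE := energy hκ hsol
    have h1 := hE x ⟨hx.1, le_trans hx.2 hT1⟩
    have h2 := hE T ⟨hT0.le, hT1⟩
    rw [hvT] at h2
    norm_num [Real.sqrt_one] at h2
    linarith
  rcases eq_or_lt_of_le hle with hxi | hxi
  · -- equal amplitudes : identical solutions
    have he₁ := hen u₁ hsol₁ hu10 hvT1 0 ⟨le_rfl, hT0.le⟩
    have he₂ := hen u₂ hsol₂ hu20 hvT2 0 ⟨le_rfl, hT0.le⟩
    rw [hu10] at he₁
    rw [hu20] at he₂
    rw [← hξ₁def] at he₁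
    rw [← hξ₂def] at he₂
    rw [hxi] at he₁
    have hinveq : (Real.sqrt (1 + κ * (deriv u₁ 0)^2))⁻¹
        = (Real.sqrt (1 + κ * (deriv u₂ 0)^2))⁻¹ := by rw [he₁, he₂]
    have hsqrteq := inv_injective hinveq
    have hX₁ : 0 < 1 + κ * (deriv u₁ 0)^2 := by positivity
    have hX₂ : 0 < 1 + κ * (deriv u₂ 0)^2 := by positivity
    have e1 := Real.sq_sqrt hX₁.le
    have e2 := Real.sq_sqrt hX₂.le
    rw [hsqrteq] at e1
    have hveq2 : (deriv u₁ 0)^2 = (deriv u₂ 0)^2 :=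
      mul_left_cancel₀ hκ.ne' (by linarith [e1, e2] :
        κ * (deriv u₁ 0)^2 = κ * (deriv u₂ 0)^2)
    have hveq : deriv u₁ 0 = deriv u₂ 0 := by
      rcases sq_eq_sq_iff_eq_or_eq_neg.mp hveq2 with h | h
      · exact h
      · exfalso; rw [h] at hv01; linarith
    have hinit : (u₁ 0, deriv u₁ 0) = (u₂ 0, deriv u₂ 0) := by
      rw [hu10, hu20, hveq]
    have := ode_unique hκ lam (t₀ := 0) ⟨le_rfl, zero_le_one⟩
      (traj hsol₁) (traj hsol₂) hinit
    intro x hx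
    exact (Prod.ext_iff.mp (this x hx)).1
  · -- strict inequality of amplitudes : contradiction via comparison
    exfalso
    have hξp1' : (0:ℝ) < ξ₁ := hξp1
    have hξp2' : (0:ℝ) < ξ₂ := hξp2
    -- seed : derivative of difference at 0 is positive
    have he₁0 : (Real.sqrt (1 + κ * (deriv u₁ 0)^2))⁻¹
        = 1 - κ * lam / 2 * (ξ₁^2 - (ξ₁ * 0)^2) := by
      have := hen u₁ hsol₁ hu10 hvT1 0 ⟨le_rfl, hT0.le⟩
      rw [hu10] at this
      rw [this]
      norm_num
      exact Or.inl rfl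
    have he₂0 : (Real.sqrt (1 + κ * (deriv u₂ 0)^2))⁻¹
        = 1 - κ * lam / 2 * (ξ₂^2 - (ξ₂ * 0)^2) := by
      have := hen u₂ hsol₂ hu20 hvT2 0 ⟨le_rfl, hT0.le⟩
      rw [hu20] at this
      rw [this]
      norm_num
      exact Or.inl rfl
    have hspd : deriv u₁ 0 / ξ₁ < deriv u₂ 0 / ξ₂ :=
      speed_lt hκ hlam hξp1' hxi le_rfl one_pos hv01 hv02 he₁0 he₂0
    set d : ℝ → ℝ := fun x => u₂ x / ξ₂ - u₁ x / ξ₁ with hddef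
    have hd0 : d 0 = 0 := by simp [hddef, hu10, hu20]
    have hdd0 : HasDerivAt d (deriv u₂ 0 / ξ₂ - deriv u₁ 0 / ξ₁) 0 :=
      (((hdu₂ 0 ⟨le_rfl, zero_le_one⟩).hasDerivAt).div_const ξ₂).sub
        (((hdu₁ 0 ⟨le_rfl, zero_le_one⟩).hasDerivAt).div_const ξ₁)
    have hseed : ∃ x, x ∈ Ioo (0:ℝ) T ∧ 0 < d x := by
      have h1 := eventually_pos_right hdd0 hd0 (by linarith)
      have h2 : Ioo (0:ℝ) T ∈ 𝓝[>] (0:ℝ) := Ioo_mem_nhdsGT_of_mem ⟨le_rfl, hT0⟩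
      obtain ⟨x, hx1, hx2⟩ := (h1.and (eventually_of_mem h2 (fun y hy => hy))).exists
      exact ⟨x, hx2, hx1⟩
    obtain ⟨xs, hxsmem, hxspos⟩ := hseed
    -- pick η > 0 with u₁ (xs+η)/ξ₁ < u₂ xs/ξ₂ and xs + η < T
    have hcont₁ : ContinuousAt (fun y => u₁ y / ξ₁) xs :=
      ((hdu₁ xs ⟨hxsmem.1.le, hxsmem.2.le.trans hT1⟩).hasDerivAt.continuousAt).div_const ξ₁
    have hlty : ∀ᶠ y in 𝓝 xs, u₁ y / ξ₁ < u₂ xs / ξ₂ := by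
      have hval : u₁ xs / ξ₁ < u₂ xs / ξ₂ := by
        have := hxspos
        simp only [hddef] at this
        linarith
      exact hcont₁.eventually_lt continuousAt_const hval
    have hy₀ : ∃ y₀, y₀ ∈ Ioo xs T ∧ u₁ y₀ / ξ₁ < u₂ xs / ξ₂ := by
      have h2 : Ioo xs T ∈ 𝓝[>] xs := Ioo_mem_nhdsGT_of_mem ⟨le_rfl, hxsmem.2⟩
      have h3 := (hlty.filter_mono nhdsWithin_le_nhds).and
        (eventually_of_mem h2 (fun y hy => hy))
      obtain ⟨y₀, hy1, hy2⟩ := h3.exists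
      exact ⟨y₀, hy2, hy1⟩
    obtain ⟨y₀, hy₀mem, hy₀lt⟩ := hy₀
    set η := y₀ - xs with hηdef
    have hη : 0 < η := by rw [hηdef]; linarith [hy₀mem.1]
    have hxsη : xs + η = y₀ := by rw [hηdef]; ring
    have hxsηT : xs + η < T := by rw [hxsη]; exact hy₀mem.2
    -- the shifted difference
    set dd : ℝ → ℝ := fun x => u₂ x / ξ₂ - u₁ (x + η) / ξ₁ with hdddef
    have hddxs : 0 < dd xs := by
      simp only [hdddef, hxsη]
      linarith
    have hTη1 : T - η ≤ 1 := by linarith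
    have hxsTη : xs < T - η := by linarith
    have hcontdd : ContinuousOn dd (Icc xs (T - η)) := by
      intro x hx
      have hx01 : x ∈ Icc (0:ℝ) 1 := ⟨hxsmem.1.le.trans hx.1, hx.2.trans hTη1⟩
      have hxη01 : x + η ∈ Icc (0:ℝ) 1 :=
        ⟨by linarith [hx01.1, hη.le], by linarith [hx.2, hT1]⟩
      have c1 := (hdu₂ x hx01).hasDerivAt.continuousAt
      have hshift : HasDerivAt (fun s : ℝ => s + η) 1 x := (hasDerivAt_id x).add_const η
      have c2 := ((hdu₁ _ hxη01).hasDerivAt.comp x hshift).continuousAt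
      exact ((c1.div_const ξ₂).sub (c2.div_const ξ₁)).continuousWithinAt
    have hddend : dd (T - η) < 0 := by
      have h1 : u₂ (T - η) < ξ₂ := by
        have := hmono2 (a := T - η) (b := T) ⟨by linarith [hxsmem.1], by linarith⟩
          ⟨hT0.le, le_rfl⟩ (by linarith)
        exact this
      have h2 : u₁ (T - η + η) = ξ₁ := by rw [show T - η + η = T by ring]
      simp only [hdddef, h2]
      have h3 : ξ₁ / ξ₁ = 1 := div_self hξp1'.ne'
      rw [h3]
      have h4 : u₂ (T - η) / ξ₂ < 1 := (div_lt_one hξp2').mpr h1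
      linarith
    -- first touching point
    set A := Icc xs (T - η) ∩ dd ⁻¹' (Iic 0) with hAdef
    have hAne : (T - η) ∈ A := ⟨⟨hxsTη.le, le_rfl⟩, hddend.le⟩
    have hAclosed : IsClosed A :=
      hcontdd.preimage_isClosed_of_isClosed isClosed_Icc isClosed_Iic
    have hAbdd : BddBelow A := ⟨xs, fun x hx => hx.1.1⟩
    set x₀ := sInf A with hx₀def
    have hx₀mem : x₀ ∈ A := hAclosed.csInf_mem ⟨_, hAne⟩ hAbdd
    have hx₀Icc : x₀ ∈ Icc xs (T - η) := hx₀mem.1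
    have hx₀le : dd x₀ ≤ 0 := hx₀mem.2
    have hx₀gt : xs < x₀ := by
      rcases eq_or_lt_of_le hx₀Icc.1 with he | h
      · exfalso; rw [← he] at hx₀le; linarith
      · exact h
    have hlb : ∀ x ∈ Ico xs x₀, 0 < dd x := by
      intro x hx
      by_contra hc
      push_neg at hc
      have : x ∈ A := ⟨⟨hx.1, hx.2.le.trans hx₀Icc.2⟩, hc⟩
      exact absurd (csInf_le hAbdd this) (not_le.mpr hx.2)
    have hdd00 : dd x₀ = 0 := by
      refine le_antisymm hx₀le ?_
      have hcAt : ContinuousAt dd x₀ := by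
        have hx01 : x₀ ∈ Icc (0:ℝ) 1 := ⟨hxsmem.1.le.trans hx₀Icc.1, hx₀Icc.2.trans hTη1⟩
        have hxη01 : x₀ + η ∈ Icc (0:ℝ) 1 :=
          ⟨by linarith [hx01.1, hη.le], by linarith [hx₀Icc.2, hT1]⟩
        have c1 := (hdu₂ x₀ hx01).hasDerivAt.continuousAt
        have hshift : HasDerivAt (fun s : ℝ => s + η) 1 x₀ := (hasDerivAt_id x₀).add_const η
        have c2 := ((hdu₁ _ hxη01).hasDerivAt.comp x₀ hshift).continuousAt
        exact (c1.div_const ξ₂).sub (c2.div_const ξ₁)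
      have htend : Tendsto dd (𝓝[<] x₀) (𝓝 (dd x₀)) :=
        hcAt.continuousWithinAt.tendsto
      refine ge_of_tendsto htend ?_
      filter_upwards [Ioo_mem_nhdsLT_of_mem ⟨hx₀gt, le_rfl⟩] with y hy
      exact (hlb y ⟨hy.1.le, hy.2⟩).le
    have hx₀lt : x₀ < T - η := by
      rcases eq_or_lt_of_le hx₀Icc.2 with he | h
      · exfalso; rw [he] at hdd00; linarith
      · exact h
    -- derivative at touching point
    have hx₀01 : x₀ ∈ Icc (0:ℝ) 1 := ⟨hxsmem.1.le.trans hx₀Icc.1, hx₀Icc.2.trans hTη1⟩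
    have hxη01 : x₀ + η ∈ Icc (0:ℝ) 1 :=
      ⟨by linarith [hx₀01.1, hη.le], by linarith [hx₀Icc.2, hT1]⟩
    have hshift : HasDerivAt (fun s : ℝ => s + η) 1 x₀ := (hasDerivAt_id x₀).add_const η
    have hcomp : HasDerivAt (fun s => u₁ (s + η)) (deriv u₁ (x₀ + η)) x₀ := by
      have := (hdu₁ _ hxη01).hasDerivAt.comp x₀ hshift
      exact this.congr_deriv (by ring)
    have hddderiv : HasDerivAt dd
        (deriv u₂ x₀ / ξ₂ - deriv u₁ (x₀ + η) / ξ₁) x₀ :=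
      (((hdu₂ x₀ hx₀01).hasDerivAt).div_const ξ₂).sub (hcomp.div_const ξ₁)
    have hdle : deriv u₂ x₀ / ξ₂ - deriv u₁ (x₀ + η) / ξ₁ ≤ 0 := by
      refine deriv_le_zero_left hx₀gt hddderiv ?_
      intro y hy
      rw [hdd00]
      exact (hlb y hy).le
    -- but speed comparison says it is positive
    set θ := u₂ x₀ / ξ₂ with hθdef
    have hu₂x₀pos : 0 < u₂ x₀ := by
      have := hmono2 (a := 0) (b := x₀) ⟨le_rfl, hT0.le⟩
        ⟨by linarith [hx₀01.1], by linarith [hx₀lt]⟩ (by linarith [hx₀gt, hxsmem.1])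
      rwa [hu20] at this
    have hθ0 : 0 ≤ θ := by rw [hθdef]; positivity
    have hθ1 : θ < 1 := by
      rw [hθdef, div_lt_one hξp2']
      exact hmono2 ⟨by linarith [hx₀01.1], by linarith [hx₀lt]⟩
        ⟨hT0.le, le_rfl⟩ (by linarith [hx₀lt])
    have hu₂θ : u₂ x₀ = ξ₂ * θ := by
      rw [hθdef]; field_simp
    have hu₁θ : u₁ (x₀ + η) = ξ₁ * θ := by
      have : u₂ x₀ / ξ₂ = u₁ (x₀ + η) / ξ₁ := by
        have := hdd00
        simp only [hdddef] at this
        linarith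
      rw [hθdef, this]
      field_simp
    have ha₁ : 0 < deriv u₁ (x₀ + η) :=
      hvpos1 _ (by linarith [hx₀01.1, hη.le]) (by linarith [hx₀lt])
    have ha₂ : 0 < deriv u₂ x₀ :=
      hvpos2 _ (by linarith [hx₀01.1]) (by linarith [hx₀lt, hη])
    have he₁x : (Real.sqrt (1 + κ * (deriv u₁ (x₀ + η))^2))⁻¹
        = 1 - κ * lam / 2 * (ξ₁^2 - (ξ₁ * θ)^2) := by
      have := hen u₁ hsol₁ hu10 hvT1 (x₀ + η)
        ⟨by linarith [hx₀01.1, hη.le], by linarith [hx₀lt]⟩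
      rw [hu₁θ] at this
      exact this
    have he₂x : (Real.sqrt (1 + κ * (deriv u₂ x₀)^2))⁻¹
        = 1 - κ * lam / 2 * (ξ₂^2 - (ξ₂ * θ)^2) := by
      have := hen u₂ hsol₂ hu20 hvT2 x₀
        ⟨by linarith [hx₀01.1], by linarith [hx₀lt, hη]⟩
      rw [hu₂θ] at this
      exact this
    have := speed_lt hκ hlam hξp1' hxi hθ0 hθ1 ha₁ ha₂ he₁x he₂x
    linarith

theorem stmt6 (κ lam : ℝ) (hκ : 0 < κ) (hlam : 0 < lam) (n : ℕ) (hn : 1 ≤ n)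
    (u₁ u₂ : ℝ → ℝ) (hu₁ : SPlus κ lam n u₁) (hu₂ : SPlus κ lam n u₂) :
    ∀ x ∈ Set.Icc (0 : ℝ) 1, u₁ x = u₂ x := by
  rcases le_total (u₁ (1/(2*(n:ℝ)))) (u₂ (1/(2*(n:ℝ)))) with h | h
  · exact main_aux hκ hlam hn hu₁ hu₂ h
  · intro x hx
    exact (main_aux hκ hlam hn hu₂ hu₁ h x hx).symm
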